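/- Let $\ell \geq 1$, let $z, b < 2^{\ell}$ be natural numbers, and let $z_A, z_B \in \mathbb{Z}/2^{\ell}\mathbb{Z}$ satisfy $z_A + z_B = z$ in $\mathbb{Z}/2^{\ell}\mathbb{Z}$. Let $x_0, \dots, x_{\ell-1} \in \mathbb{Z}/2\mathbb{Z}$ be the outputs of the bit-decomposition recursion applied to the binary digits of the natural-number representatives of $z_A$ and $z_B$ (carries $c_0 = a_0 b_0$, $c_i = ((a_i+b_i)c_{i-1}+1)(a_i b_i + 1)+1$, outputs $x_0 = a_0 + b_0$, $x_i = a_i + b_i + c_{i-1}$), and let $\beta_0,\dots,\beta_{\ell-1} \in \mathbb{Z}/2\mathbb{Z}$ be the binary digits of $b$. Then the comparison output $w = 1 + \sum_{i=0}^{\ell-1} \beta_i(1 - x_i) \prod_{j=i+1}^{\ell-1}(x_j + \beta_j + 1)$, computed in $\mathbb{Z}/2\mathbb{Z}$, satisfies $w = 1$ if and only if $z \geq b$. (This is the correctness of the composed privacy-preserving SVM pipeline: bit-decomposing the shared inner-product value and then running the secure comparison against the threshold yields $\mathsf{sign}(z - b)$, i.e., the SVM classification outcome.) -/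
import Mathlib


/-- The `i`-th binary digit of a natural number, embedded into `ℤ/2ℤ`. -/
def natBit (n i : ℕ) : ZMod 2 := if n.testBit i then 1 else 0

/-- The carries of the bit-decomposition protocol `π_Decomp` applied to the
natural numbers `a` and `b`: `c_0 = a_0 b_0` and
`c_i = ((a_i + b_i) c_{i-1} + 1)(a_i b_i + 1) + 1` (arithmetic in `ℤ/2ℤ`). -/
def decompCarry (a b : ℕ) : ℕ → ZMod 2
  | 0 => natBit a 0 * natBit b 0
  | i + 1 =>
      ((natBit a (i + 1) + natBit b (i + 1)) * decompCarry a b i + 1) *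
          (natBit a (i + 1) * natBit b (i + 1) + 1) + 1

/-- The output bits of the bit-decomposition protocol `π_Decomp`:
`x_0 = a_0 + b_0` and `x_i = a_i + b_i + c_{i-1}` (arithmetic in `ℤ/2ℤ`). -/
def decompBit (a b : ℕ) : ℕ → ZMod 2
  | 0 => natBit a 0 + natBit b 0
  | i + 1 => natBit a (i + 1) + natBit b (i + 1) + decompCarry a b i

/-- the i-th bit of n as a natural number -/
def bitN (n i : ℕ) : ℕ := n / 2 ^ i % 2

lemma bitN_le_one (n i : ℕ) : bitN n i ≤ 1 := Nat.lt_succ_iff.mp (Nat.mod_lt _ (by norm_num))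

lemma natBit_cast (n i : ℕ) : natBit n i = ((bitN n i : ℕ) : ZMod 2) := by
  rw [natBit, Nat.testBit_eq_decide_div_mod_eq, bitN]
  rcases Nat.mod_two_eq_zero_or_one (n / 2 ^ i) with h | h <;> simp [h]

/-- the carry out of position i when adding a and b -/
def cN (a b i : ℕ) : ℕ := (a % 2 ^ (i + 1) + b % 2 ^ (i + 1)) / 2 ^ (i + 1)

lemma cN_le_one (a b i : ℕ) : cN a b i ≤ 1 := by
  have h1 := Nat.mod_lt a (y := 2 ^ (i+1)) (by positivity)
  have h2 := Nat.mod_lt b (y := 2 ^ (i+1)) (by positivity)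
  rw [cN, Nat.lt_succ_iff.symm, Nat.div_lt_iff_lt_mul (by positivity)]
  omega

lemma mod_pow_succ' (n i : ℕ) : n % 2 ^ (i + 1) = n % 2 ^ i + 2 ^ i * bitN n i := by
  conv_lhs => rw [pow_succ, Nat.mod_mul]
  rfl

lemma key_split (a b i : ℕ) :
    a % 2 ^ (i + 2) + b % 2 ^ (i + 2) =
      2 ^ (i + 1) * (bitN a (i + 1) + bitN b (i + 1) + cN a b i)
        + (a % 2 ^ (i + 1) + b % 2 ^ (i + 1)) % 2 ^ (i + 1) := by
  have ha := mod_pow_succ' a (i + 1)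
  have hb := mod_pow_succ' b (i + 1)
  have hc := Nat.div_add_mod (a % 2 ^ (i + 1) + b % 2 ^ (i + 1)) (2 ^ (i + 1))
  rw [ha, hb]
  rw [cN] at *
  ring_nf
  ring_nf at hc
  omega

lemma cN_succ (a b i : ℕ) :
    cN a b (i + 1) = (bitN a (i + 1) + bitN b (i + 1) + cN a b i) / 2 := by
  rw [cN, key_split]
  rw [show (2:ℕ) ^ (i + 2) = 2 ^ (i + 1) * 2 from pow_succ 2 (i+1)]
  rw [← Nat.div_div_eq_div_mul, Nat.mul_add_div (by positivity),
    Nat.div_eq_of_lt (Nat.mod_lt _ (by positivity)), Nat.add_zero]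

lemma bitN_add_zero (a b : ℕ) : bitN (a + b) 0 = (bitN a 0 + bitN b 0) % 2 := by
  show (a + b) / 2 ^ 0 % 2 = (a / 2 ^ 0 % 2 + b / 2 ^ 0 % 2) % 2
  rw [pow_zero, Nat.div_one, Nat.div_one, Nat.div_one, ← Nat.add_mod]

lemma cN_zero (a b : ℕ) : cN a b 0 = (bitN a 0 + bitN b 0) / 2 := by
  show (a % 2 ^ (0 + 1) + b % 2 ^ (0 + 1)) / 2 ^ (0 + 1) = (a / 2 ^ 0 % 2 + b / 2 ^ 0 % 2) / 2
  rw [pow_zero, zero_add, pow_one, Nat.div_one, Nat.div_one]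

lemma bitN_add_succ (a b i : ℕ) :
    bitN (a + b) (i + 1) = (bitN a (i + 1) + bitN b (i + 1) + cN a b i) % 2 := by
  have h1 : bitN (a + b) (i + 1) = (a + b) % 2 ^ (i + 2) / 2 ^ (i + 1) := by
    rw [bitN, show (2:ℕ) ^ (i + 2) = 2 ^ (i + 1) * 2 from pow_succ 2 (i+1),
      Nat.mod_mul_right_div_self]
  rw [h1]
  have h2 : (a + b) % 2 ^ (i + 2) = (a % 2 ^ (i + 2) + b % 2 ^ (i + 2)) % 2 ^ (i + 2) :=
    (Nat.add_mod a b _)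
  rw [h2, key_split]
  set q := bitN a (i + 1) + bitN b (i + 1) + cN a b i with hq
  set S := (a % 2 ^ (i + 1) + b % 2 ^ (i + 1)) % 2 ^ (i + 1) with hS
  have hSlt : S < 2 ^ (i + 1) := Nat.mod_lt _ (by positivity)
  rw [show (2:ℕ) ^ (i + 2) = 2 ^ (i + 1) * 2 from pow_succ 2 (i+1)]
  have hq2 : q % 2 ≤ 1 := Nat.lt_succ_iff.mp (Nat.mod_lt _ (by norm_num))
  have hS2 : S % (2 ^ (i + 1) * 2) = S := Nat.mod_eq_of_lt (by nlinarith)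
  have h3 : (2 ^ (i + 1) * q + S) % (2 ^ (i + 1) * 2) = 2 ^ (i + 1) * (q % 2) + S := by
    rw [Nat.add_mod, Nat.mul_mod_mul_left, hS2, Nat.mod_eq_of_lt (by nlinarith)]
  rw [h3, Nat.mul_add_div (by positivity), Nat.div_eq_of_lt hSlt, Nat.add_zero]

lemma decompCarry_eq (a b : ℕ) : ∀ i, decompCarry a b i = ((cN a b i : ℕ) : ZMod 2)
  | 0 => by
    rw [decompCarry, cN_zero, natBit_cast, natBit_cast]
    have ha := bitN_le_one a 0
    have hb := bitN_le_one b 0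
    interval_cases (bitN a 0) <;> interval_cases (bitN b 0) <;> decide
  | (i + 1) => by
    rw [decompCarry, decompCarry_eq a b i, cN_succ, natBit_cast, natBit_cast]
    have ha := bitN_le_one a (i + 1)
    have hb := bitN_le_one b (i + 1)
    have hc := cN_le_one a b i
    interval_cases (bitN a (i+1)) <;> interval_cases (bitN b (i+1)) <;>
      interval_cases (cN a b i) <;> decide

lemma decompBit_eq (a b : ℕ) : ∀ i, decompBit a b i = natBit (a + b) i
  | 0 => by
    rw [decompBit, natBit_cast, natBit_cast, natBit_cast, bitN_add_zero, ZMod.natCast_mod]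
    push_cast
    ring
  | (i + 1) => by
    rw [decompBit, decompCarry_eq, natBit_cast, natBit_cast, natBit_cast, bitN_add_succ,
      ZMod.natCast_mod]
    push_cast
    ring

lemma factor_eq (z b j : ℕ) :
    natBit z j + natBit b j + 1 = if z.testBit j = b.testBit j then 1 else 0 := by
  rw [natBit, natBit]
  cases hz : z.testBit j <;> cases hb : b.testBit j <;> simp <;> decide

lemma head_eq (z b i : ℕ) :
    natBit b i * (1 - natBit z i) =
      if b.testBit i = true ∧ z.testBit i = false then 1 else 0 := by
  rw [natBit, natBit]
  cases hz : z.testBit i <;> cases hb : b.testBit i <;> simp <;> decide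

open Classical in
lemma term_eq (ℓ z b i : ℕ) :
    natBit b i * (1 - natBit z i) * ∏ j ∈ Finset.Ico (i + 1) ℓ, (natBit z j + natBit b j + 1) =
      if b.testBit i = true ∧ z.testBit i = false ∧
          ∀ j ∈ Finset.Ico (i + 1) ℓ, z.testBit j = b.testBit j then 1 else 0 := by
  by_cases hall : ∀ j ∈ Finset.Ico (i + 1) ℓ, z.testBit j = b.testBit j
  · have hp : ∏ j ∈ Finset.Ico (i + 1) ℓ, (natBit z j + natBit b j + 1) = 1 :=
      Finset.prod_eq_one fun j hj => by rw [factor_eq, if_pos (hall j hj)]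
    rw [hp, mul_one, head_eq]
    by_cases hh : b.testBit i = true ∧ z.testBit i = false
    · rw [if_pos hh, if_pos ⟨hh.1, hh.2, hall⟩]
    · rw [if_neg hh, if_neg (by tauto)]
  · push_neg at hall
    obtain ⟨j, hj, hne⟩ := hall
    have hp : ∏ j ∈ Finset.Ico (i + 1) ℓ, (natBit z j + natBit b j + 1) = 0 :=
      Finset.prod_eq_zero hj (by rw [factor_eq, if_neg hne])
    rw [hp, mul_zero, if_neg (by tauto)]

lemma high_bit_eq {n ℓ j : ℕ} (hn : n < 2 ^ ℓ) (hj : ℓ ≤ j) : n.testBit j = false :=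
  Nat.testBit_lt_two_pow (lt_of_lt_of_le hn (Nat.pow_le_pow_right (by norm_num) hj))

lemma sum_eq (ℓ z b : ℕ) (hz : z < 2 ^ ℓ) (hb : b < 2 ^ ℓ) :
    ∑ i ∈ Finset.range ℓ,
        natBit b i * (1 - natBit z i) * ∏ j ∈ Finset.Ico (i + 1) ℓ, (natBit z j + natBit b j + 1) =
      if b ≤ z then 0 else 1 := by
  by_cases hle : b ≤ z
  · rw [if_pos hle]
    refine Finset.sum_eq_zero fun i _ => ?_
    rw [term_eq, if_neg]
    rintro ⟨h1, h2, h3⟩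
    have : z < b := by
      refine Nat.lt_of_testBit i h2 h1 fun j hij => ?_
      by_cases hjl : j < ℓ
      · exact h3 j (Finset.mem_Ico.mpr ⟨hij, hjl⟩)
      · rw [high_bit_eq hz (by omega), high_bit_eq hb (by omega)]
    omega
  · push_neg at hle
    rw [if_neg (by omega)]
    have hne : z ≠ b := by omega
    set D := (Finset.range ℓ).filter (fun i => ¬(z.testBit i = b.testBit i)) with hD
    have hDne : D.Nonempty := by
      by_contra h
      rw [Finset.not_nonempty_iff_eq_empty] at h
      refine hne (Nat.eq_of_testBit_eq fun i => ?_)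
      by_cases hi : i < ℓ
      · by_contra hne'
        have : i ∈ D := Finset.mem_filter.mpr ⟨Finset.mem_range.mpr hi, hne'⟩
        simp [h] at this
      · rw [high_bit_eq hz (by omega), high_bit_eq hb (by omega)]
    set k := D.max' hDne with hk
    have hkD : k ∈ D := D.max'_mem hDne
    have hkl : k < ℓ := Finset.mem_range.mp (Finset.mem_filter.mp hkD).1
    have hkne : ¬(z.testBit k = b.testBit k) := (Finset.mem_filter.mp hkD).2
    have hhigh : ∀ j, k < j → z.testBit j = b.testBit j := by
      intro j hjk
      by_cases hjl : j < ℓ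
      · by_contra hne'
        have hjD : j ∈ D := Finset.mem_filter.mpr ⟨Finset.mem_range.mpr hjl, hne'⟩
        exact absurd (D.le_max' j hjD) (by omega)
      · rw [high_bit_eq hz (by omega), high_bit_eq hb (by omega)]
    have hbk : b.testBit k = true ∧ z.testBit k = false := by
      cases hzk : z.testBit k <;> cases hbk : b.testBit k
      · simp [hzk, hbk] at hkne
      · exact ⟨rfl, rfl⟩
      · exfalso
        have : b < z := Nat.lt_of_testBit k (by simp [hbk]) (by simp [hzk])
          fun j hj => (hhigh j hj).symm
        omega
      · simp [hzk, hbk] at hkne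
    rw [Finset.sum_eq_single_of_mem k (Finset.mem_range.mpr hkl)]
    · rw [term_eq, if_pos ⟨hbk.1, hbk.2, fun j hj => hhigh j (Finset.mem_Ico.mp hj).1⟩]
    · intro i hi hik
      rw [term_eq, if_neg]
      rintro ⟨h1, h2, h3⟩
      rcases lt_or_gt_of_ne hik with h | h
      · exact hkne (h3 k (Finset.mem_Ico.mpr ⟨h, hkl⟩))
      · have := hhigh i h
        rw [h2, h1] at this
        exact absurd this (by simp)

/-- Correctness of the composed privacy-preserving SVM pipeline: bit-decompose
the additive sharing `(z_A, z_B)` of the inner-product value `z` over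
`ℤ/2^ℓℤ` into bits `x_i`, then run the secure comparison against the bits
`β_i` of the threshold `b`; the output
`w = 1 + ∑_{i<ℓ} β_i (1 - x_i) ∏_{j=i+1}^{ℓ-1} (x_j + β_j + 1)` satisfies
`w = 1` iff `z ≥ b`, i.e., it is the SVM classification outcome
`sign(z - b)`. -/
theorem privacy_preserving_svm_pipeline_correct (ℓ : ℕ) (hℓ : 1 ≤ ℓ)
    (z b : ℕ) (hz : z < 2 ^ ℓ) (hb : b < 2 ^ ℓ)
    (zA zB : ZMod (2 ^ ℓ)) (hshare : zA + zB = (z : ZMod (2 ^ ℓ)))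
    (x : ℕ → ZMod 2) (hx : ∀ i, x i = decompBit zA.val zB.val i)
    (β : ℕ → ZMod 2) (hβ : ∀ i, β i = natBit b i)
    (w : ZMod 2)
    (hw : w = 1 + ∑ i ∈ Finset.range ℓ,
        β i * (1 - x i) * ∏ j ∈ Finset.Ico (i + 1) ℓ, (x j + β j + 1)) :
    w = 1 ↔ b ≤ z := by
  haveI : NeZero (2 ^ ℓ) := ⟨by positivity⟩
  have hmod : (zA.val + zB.val) % 2 ^ ℓ = z := by
    have hcast : ((zA.val + zB.val : ℕ) : ZMod (2 ^ ℓ)) = (z : ZMod (2 ^ ℓ)) := by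
      push_cast
      rw [ZMod.natCast_rightInverse zA, ZMod.natCast_rightInverse zB]
      exact hshare
    have hmc := (ZMod.natCast_eq_natCast_iff _ _ _).mp hcast
    have hzmod : z % 2 ^ ℓ = z := Nat.mod_eq_of_lt hz
    unfold Nat.ModEq at hmc
    omega
  have hxz : ∀ i < ℓ, x i = natBit z i := by
    intro i hi
    rw [hx, decompBit_eq]
    unfold natBit
    rw [← hmod, Nat.testBit_mod_two_pow]
    simp [hi]
  have hsum : ∑ i ∈ Finset.range ℓ,
      β i * (1 - x i) * ∏ j ∈ Finset.Ico (i + 1) ℓ, (x j + β j + 1)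
      = if b ≤ z then 0 else 1 := by
    rw [← sum_eq ℓ z b hz hb]
    refine Finset.sum_congr rfl fun i hi => ?_
    have hi' := Finset.mem_range.mp hi
    rw [hβ, hxz i hi']
    congr 1
    refine Finset.prod_congr rfl fun j hj => ?_
    have hj' := Finset.mem_Ico.mp hj
    rw [hβ, hxz j (by omega)]
  rw [hw, hsum]
  by_cases h : b ≤ z
  · simp [h]
  · rw [if_neg h]
    constructor
    · intro h01
      exact absurd h01 (by decide)
    · intro hbz
      exact absurd hbz h
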